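/- Let CT = CT(λ_0,…,λ_k) be a caterpillar of length k ≥ 1 and f an optimal independent broadcast on CT. Then at least one pendent neighbour of v_0 is an f-broadcast vertex, and at least one pendent neighbour of v_k is an f-broadcast vertex. -/

import Mathlib

open SimpleGraph Finset
open scoped Classical

variable {V : Type*}

noncomputable def ecc [Fintype V] (G : SimpleGraph V) (v : V) : ℕ :=
  Finset.univ.sup (fun u => G.dist v u)

noncomputable def gdiam [Fintype V] (G : SimpleGraph V) : ℕ :=
  Finset.univ.sup (fun v => ecc G v)

def IsIndepBroadcast [Fintype V] (G : SimpleGraph V) (f : V → ℕ) : Prop :=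
  (∀ v, f v ≤ ecc G v) ∧
  ∀ u v, u ≠ v → 0 < f u → 0 < f v → max (f u) (f v) < G.dist u v

def cost [Fintype V] (f : V → ℕ) : ℕ := ∑ v, f v

noncomputable def betaB [Fintype V] (G : SimpleGraph V) : ℕ :=
  sSup {c | ∃ f, IsIndepBroadcast G f ∧ cost f = c}

abbrev CatV (k : ℕ) (lam : Fin (k+1) → ℕ) := Fin (k+1) ⊕ (Σ i : Fin (k+1), Fin (lam i))

def caterpillar (k : ℕ) (lam : Fin (k+1) → ℕ) : SimpleGraph (CatV k lam) :=
  SimpleGraph.fromRel (fun u v => match u, v with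
    | Sum.inl i, Sum.inl j => (i : ℕ) + 1 = (j : ℕ)
    | Sum.inl i, Sum.inr p => i = p.1
    | _, _ => False)

def numLeaves (k : ℕ) (lam : Fin (k+1) → ℕ) : ℕ := ∑ i, lam i

def numTrunks (k : ℕ) (lam : Fin (k+1) → ℕ) : ℕ :=
  (Finset.univ.filter (fun i : Fin (k+1) => lam i = 0)).card

def noAdjTrunks (k : ℕ) (lam : Fin (k+1) → ℕ) : Prop :=
  ∀ i j : Fin (k+1), (i : ℕ) + 1 = (j : ℕ) → ¬(lam i = 0 ∧ lam j = 0)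

def fstar (k : ℕ) (lam : Fin (k+1) → ℕ) (f : CatV k lam → ℕ) (i : Fin (k+1)) : ℕ :=
  f (Sum.inl i) + ∑ j, f (Sum.inr ⟨i, j⟩)

/- ======================= auxiliary development ======================= -/

namespace CatAux

variable {k : ℕ} {lam : Fin (k+1) → ℕ}

/-- position of a vertex along the spine -/
def pos : CatV k lam → ℕ := Sum.elim (fun i => (i : ℕ)) (fun p => (p.1 : ℕ))

lemma adj_iff (u v : CatV k lam) :
    (caterpillar k lam).Adj u v ↔ u ≠ v ∧
      ((match u, v with
        | Sum.inl i, Sum.inl j => (i : ℕ) + 1 = (j : ℕ)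
        | Sum.inl i, Sum.inr p => i = p.1
        | _, _ => False) ∨
       (match v, u with
        | Sum.inl i, Sum.inl j => (i : ℕ) + 1 = (j : ℕ)
        | Sum.inl i, Sum.inr p => i = p.1
        | _, _ => False)) := by
  rw [caterpillar, SimpleGraph.fromRel_adj]

lemma adj_spine {i j : Fin (k+1)} (h : (i : ℕ) + 1 = (j : ℕ)) :
    (caterpillar k lam).Adj (Sum.inl i) (Sum.inl j) := by
  rw [adj_iff]
  refine ⟨?_, Or.inl h⟩
  intro hc
  have hij : i = j := Sum.inl.inj hc
  subst hij
  omega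

lemma adj_leaf (i : Fin (k+1)) (t : Fin (lam i)) :
    (caterpillar k lam).Adj (Sum.inl i) (Sum.inr ⟨i, t⟩) := by
  rw [adj_iff]
  exact ⟨by simp, Or.inl rfl⟩

lemma neighbor_of_leaf {i : Fin (k+1)} {t : Fin (lam i)} {y : CatV k lam}
    (h : (caterpillar k lam).Adj (Sum.inr ⟨i, t⟩) y) : y = Sum.inl i := by
  rw [adj_iff] at h
  rcases h with ⟨-, h | h⟩
  · cases y <;> simp_all
  · cases y with
    | inl j => simp only at h; subst h; rfl
    | inr q => simp_all

lemma reach_inl (i : Fin (k+1)) :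
    (caterpillar k lam).Reachable (Sum.inl 0) (Sum.inl i) := by
  suffices h : ∀ n (hn : n ≤ k), (caterpillar k lam).Reachable (Sum.inl 0) (Sum.inl ⟨n, by omega⟩) by
    have := h i.1 (by omega)
    simpa using this
  intro n hn
  induction n with
  | zero =>
    have : (0 : Fin (k+1)) = ⟨0, by omega⟩ := by ext; simp
    rw [← this]
  | succ m ih =>
    refine (ih (by omega)).trans ?_
    exact (adj_spine (by simp)).reachable

lemma connected : (caterpillar k lam).Connected := by
  rw [connected_iff]
  refine ⟨fun u v => ?_, ⟨Sum.inl 0⟩⟩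
  have h : ∀ w : CatV k lam, (caterpillar k lam).Reachable (Sum.inl 0) w := by
    intro w
    cases w with
    | inl i => exact reach_inl i
    | inr p => exact (reach_inl p.1).trans (adj_leaf p.1 p.2).reachable
  exact (h u).symm.trans (h v)

lemma pos_lip {u v : CatV k lam} (p : (caterpillar k lam).Walk u v) :
    Nat.dist (pos u) (pos v) ≤ p.length := by
  induction p with
  | nil => simp [Nat.dist]
  | @cons a b c h p ih =>
    have hab : Nat.dist (pos a) (pos b) ≤ 1 := by
      rw [adj_iff] at h
      rcases h with ⟨-, h | h⟩ <;>
      · cases a <;> cases b <;> simp_all [pos, Nat.dist] <;> omega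
    calc Nat.dist (pos a) (pos c) ≤ Nat.dist (pos a) (pos b) + Nat.dist (pos b) (pos c) :=
          Nat.dist.triangle_inequality _ _ _
      _ ≤ 1 + p.length := Nat.add_le_add hab ih
      _ = (SimpleGraph.Walk.cons h p).length := by simp [SimpleGraph.Walk.length_cons]; omega

lemma pos_le_dist (u v : CatV k lam) :
    Nat.dist (pos u) (pos v) ≤ (caterpillar k lam).dist u v := by
  obtain ⟨p, hp⟩ := (connected u v).exists_walk_length_eq_dist
  exact hp ▸ pos_lip p

lemma dist_ll (i j : Fin (k+1)) :
    (caterpillar k lam).dist (Sum.inl i) (Sum.inl j) = Nat.dist (i : ℕ) (j : ℕ) := by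
  refine le_antisymm ?_ (by simpa [pos] using pos_le_dist (Sum.inl i : CatV k lam) (Sum.inl j))
  -- upper bound: induction on distance along the spine
  suffices h : ∀ d (i j : Fin (k+1)), (j : ℕ) = (i : ℕ) + d →
      (caterpillar k lam).dist (Sum.inl i) (Sum.inl j) ≤ d by
    rcases le_total (i : ℕ) (j : ℕ) with hle | hle
    · have := h ((j : ℕ) - i) i j (by omega)
      calc (caterpillar k lam).dist (Sum.inl i) (Sum.inl j) ≤ (j : ℕ) - i := this
        _ ≤ Nat.dist (i : ℕ) (j : ℕ) := by simp [Nat.dist]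
    · have := h ((i : ℕ) - j) j i (by omega)
      rw [SimpleGraph.dist_comm]
      calc (caterpillar k lam).dist (Sum.inl j) (Sum.inl i) ≤ (i : ℕ) - j := this
        _ ≤ Nat.dist (i : ℕ) (j : ℕ) := by simp [Nat.dist]
  intro d
  induction d with
  | zero =>
    intro i j hij
    have : i = j := by ext; omega
    subst this
    simp
  | succ m ih =>
    intro i j hij
    have hjk : (i : ℕ) + m ≤ k := by omega
    set j' : Fin (k+1) := ⟨(i : ℕ) + m, by omega⟩ with hj'
    have h1 : (caterpillar k lam).dist (Sum.inl i) (Sum.inl j') ≤ m := ih i j' rfl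
    have h2 : (caterpillar k lam).Adj (Sum.inl j') (Sum.inl j) := adj_spine (by simp [hj']; omega)
    calc (caterpillar k lam).dist (Sum.inl i) (Sum.inl j)
        ≤ (caterpillar k lam).dist (Sum.inl i) (Sum.inl j') +
          (caterpillar k lam).dist (Sum.inl j') (Sum.inl j) := connected.dist_triangle
      _ ≤ m + 1 := by
          have : (caterpillar k lam).dist (Sum.inl j') (Sum.inl j) ≤ 1 := by
            simpa using SimpleGraph.dist_le h2.toWalk
          omega

lemma dist_leaf_eq {i : Fin (k+1)} (t : Fin (lam i)) {x : CatV k lam}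
    (hx : x ≠ Sum.inr ⟨i, t⟩) :
    (caterpillar k lam).dist (Sum.inr ⟨i, t⟩) x = (caterpillar k lam).dist (Sum.inl i) x + 1 := by
  refine le_antisymm ?_ ?_
  · calc (caterpillar k lam).dist (Sum.inr ⟨i, t⟩) x
        ≤ (caterpillar k lam).dist (Sum.inr ⟨i, t⟩) (Sum.inl i) +
          (caterpillar k lam).dist (Sum.inl i) x := connected.dist_triangle
      _ ≤ 1 + (caterpillar k lam).dist (Sum.inl i) x := by
          have := SimpleGraph.dist_le (adj_leaf i t).symm.toWalk
          simp at this; omega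
      _ = (caterpillar k lam).dist (Sum.inl i) x + 1 := by omega
  · obtain ⟨p, hp⟩ := (connected (Sum.inr ⟨i, t⟩ : CatV k lam) x).exists_walk_length_eq_dist
    cases p with
    | nil => exact absurd rfl (Ne.symm hx)
    | @cons _ b _ h q =>
      have hb : b = Sum.inl i := neighbor_of_leaf h
      subst hb
      have : (caterpillar k lam).dist (Sum.inl i) x ≤ q.length := SimpleGraph.dist_le q
      simp [SimpleGraph.Walk.length_cons] at hp
      omega

lemma dist_lr (i j : Fin (k+1)) (t : Fin (lam j)) :
    (caterpillar k lam).dist (Sum.inl i) (Sum.inr ⟨j, t⟩) = Nat.dist (i : ℕ) (j : ℕ) + 1 := by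
  rw [SimpleGraph.dist_comm, dist_leaf_eq t (by simp), SimpleGraph.dist_comm, dist_ll,
    Nat.dist_comm]

lemma dist_rr {i j : Fin (k+1)} (t : Fin (lam i)) (s : Fin (lam j))
    (hne : (Sum.inr ⟨i, t⟩ : CatV k lam) ≠ Sum.inr ⟨j, s⟩) :
    (caterpillar k lam).dist (Sum.inr ⟨i, t⟩) (Sum.inr ⟨j, s⟩) = Nat.dist (i : ℕ) (j : ℕ) + 2 := by
  rw [dist_leaf_eq t (Ne.symm hne), dist_lr]

lemma dist_le_diam (u v : CatV k lam) : (caterpillar k lam).dist u v ≤ k + 2 := by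
  have hd : ∀ i j : Fin (k+1), Nat.dist (i : ℕ) (j : ℕ) ≤ k := by
    intro i j
    have := i.2; have := j.2
    simp [Nat.dist]; omega
  by_cases huv : u = v
  · subst huv; rw [SimpleGraph.dist_self]; omega
  cases u with
  | inl i =>
    cases v with
    | inl j => rw [dist_ll]; have := hd i j; omega
    | inr p => rw [dist_lr]; have := hd i p.1; omega
  | inr p =>
    cases v with
    | inl j =>
      rw [SimpleGraph.dist_comm, dist_lr]
      have := hd j p.1; omega
    | inr q =>
      rw [dist_rr p.2 q.2 (by simpa using huv)]
      have := hd p.1 q.1; omega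

lemma ecc_le (v : CatV k lam) : ecc (caterpillar k lam) v ≤ k + 2 :=
  Finset.sup_le fun u _ => dist_le_diam v u

lemma dist_end_leaves (hk : 1 ≤ k) (t : Fin (lam 0)) (s : Fin (lam (Fin.last k))) :
    (caterpillar k lam).dist (Sum.inr ⟨0, t⟩) (Sum.inr ⟨Fin.last k, s⟩) = k + 2 := by
  have h0l : (0 : Fin (k+1)) ≠ Fin.last k := by
    intro h
    have := congrArg Fin.val h
    simp [Fin.last] at this
    omega
  rw [dist_rr t s (by simp [h0l])]
  simp [Nat.dist, Fin.last]

lemma ecc_leaf0 (hk : 1 ≤ k) (hl : 0 < lam (Fin.last k)) (t : Fin (lam 0)) :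
    k + 2 ≤ ecc (caterpillar k lam) (Sum.inr ⟨0, t⟩) := by
  have := dist_end_leaves hk t ⟨0, hl⟩
  calc k + 2 = (caterpillar k lam).dist (Sum.inr ⟨0, t⟩) (Sum.inr ⟨Fin.last k, ⟨0, hl⟩⟩) :=
        this.symm
    _ ≤ _ := Finset.le_sup (Finset.mem_univ _)

lemma ecc_leafk (hk : 1 ≤ k) (h0 : 0 < lam 0) (s : Fin (lam (Fin.last k))) :
    k + 2 ≤ ecc (caterpillar k lam) (Sum.inr ⟨Fin.last k, s⟩) := by
  have := dist_end_leaves hk (⟨0, h0⟩ : Fin (lam 0)) s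
  calc k + 2 = (caterpillar k lam).dist (Sum.inr ⟨Fin.last k, s⟩) (Sum.inr ⟨0, ⟨0, h0⟩⟩) := by
        rw [SimpleGraph.dist_comm]; exact this.symm
    _ ≤ _ := Finset.le_sup (Finset.mem_univ _)

lemma cost_le_betaB {W : Type*} [Fintype W] (G : SimpleGraph W) (g : W → ℕ)
    (hg : IsIndepBroadcast G g) : cost g ≤ betaB G := by
  apply le_csSup
  · refine ⟨∑ v, ecc G v, ?_⟩
    rintro c ⟨h, hh, rfl⟩
    exact Finset.sum_le_sum fun v _ => hh.1 v
  · exact ⟨g, hg, rfl⟩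

lemma betaB_lb (hk : 1 ≤ k) (h0 : 0 < lam 0) (hl : 0 < lam (Fin.last k)) :
    2 * k + 2 ≤ betaB (caterpillar k lam) := by
  set l0 : CatV k lam := Sum.inr ⟨0, ⟨0, h0⟩⟩ with hl0
  set lk : CatV k lam := Sum.inr ⟨Fin.last k, ⟨0, hl⟩⟩ with hlk
  have hne : l0 ≠ lk := by
    simp only [hl0, hlk, ne_eq, Sum.inr.injEq]
    intro h
    have := congrArg (fun p => (p.1 : ℕ)) h
    simp [Fin.last] at this
    omega
  set g : CatV k lam → ℕ :=
    fun v => (if v = l0 then k + 1 else 0) + (if v = lk then k + 1 else 0) with hg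
  have hgl0 : g l0 = k + 1 := by simp [hg, hne]
  have hglk : g lk = k + 1 := by simp [hg, Ne.symm hne]
  have hpos : ∀ v, 0 < g v → v = l0 ∨ v = lk := by
    intro v hv
    by_contra hc
    push_neg at hc
    simp [hg, hc.1, hc.2] at hv
  have hib : IsIndepBroadcast (caterpillar k lam) g := by
    constructor
    · intro v
      by_cases h1 : v = l0
      · subst h1; rw [hgl0, hl0]
        have := ecc_leaf0 hk hl (⟨0, h0⟩ : Fin (lam 0)); omega
      by_cases h2 : v = lk
      · subst h2; rw [hglk, hlk]
        have := ecc_leafk hk h0 (⟨0, hl⟩ : Fin (lam (Fin.last k))); omega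
      · simp [hg, h1, h2]
    · intro u v huv hu hv
      rcases hpos u hu with rfl | rfl <;> rcases hpos v hv with rfl | rfl
      · exact absurd rfl huv
      · rw [hgl0, hglk, hl0, hlk, dist_end_leaves hk]
        simp
      · rw [hgl0, hglk, hl0, hlk, SimpleGraph.dist_comm, dist_end_leaves hk]
        simp
      · exact absurd rfl huv
  have hcost : cost g = 2 * k + 2 := by
    unfold cost
    rw [hg]
    rw [Finset.sum_add_distrib]
    rw [Finset.sum_ite_eq' Finset.univ l0 (fun _ => k + 1),
      Finset.sum_ite_eq' Finset.univ lk (fun _ => k + 1)]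
    simp; omega
  exact hcost ▸ cost_le_betaB _ g hib

lemma not_leaf0_val {p : Σ i : Fin (k+1), Fin (lam i)}
    (h : ∀ t : Fin (lam 0), (Sum.inr p : CatV k lam) ≠ Sum.inr ⟨0, t⟩) : (p.1 : ℕ) ≠ 0 := by
  obtain ⟨i, t⟩ := p
  intro hv
  have hi : i = 0 := Fin.ext (by simpa using hv)
  subst hi
  exact h t rfl

lemma dist_from0_le {u w : CatV k lam}
    (hu0 : ∀ t : Fin (lam 0), u ≠ Sum.inr ⟨0, t⟩)
    (hw0 : ∀ t : Fin (lam 0), w ≠ Sum.inr ⟨0, t⟩) (huw : u ≠ w)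
    (hmin : (caterpillar k lam).dist (Sum.inl 0) u ≤ (caterpillar k lam).dist (Sum.inl 0) w) :
    (caterpillar k lam).dist u w ≤ (caterpillar k lam).dist (Sum.inl 0) w := by
  have h00 : ((0 : Fin (k+1)) : ℕ) = 0 := rfl
  cases u with
  | inl i =>
    cases w with
    | inl j =>
      rw [dist_ll] at hmin ⊢
      rw [dist_ll] at hmin ⊢
      simp [Nat.dist, h00] at *
      omega
    | inr q =>
      obtain ⟨j, s⟩ := q
      have hj : (j : ℕ) ≠ 0 := not_leaf0_val hw0
      rw [dist_ll, dist_lr] at hmin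
      rw [dist_lr, dist_lr]
      simp [Nat.dist, h00] at *
      have h00' : ((0 : Fin (k+1)) : ℕ) = 0 := rfl; omega
  | inr p =>
    obtain ⟨i, t⟩ := p
    have hi : (i : ℕ) ≠ 0 := not_leaf0_val hu0
    cases w with
    | inl j =>
      rw [dist_lr, dist_ll] at hmin
      rw [SimpleGraph.dist_comm, dist_lr, dist_ll]
      simp [Nat.dist, h00] at *
      have h00' : ((0 : Fin (k+1)) : ℕ) = 0 := rfl; omega
    | inr q =>
      obtain ⟨j, s⟩ := q
      have hj : (j : ℕ) ≠ 0 := not_leaf0_val hw0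
      rw [dist_lr, dist_lr] at hmin
      rw [dist_rr t s huw, dist_lr]
      simp [Nat.dist, h00] at *
      have h00' : ((0 : Fin (k+1)) : ℕ) = 0 := rfl; omega

lemma key (hk : 1 ≤ k) (h0 : 0 < lam 0) (hl : 0 < lam (Fin.last k))
    (f : CatV k lam → ℕ) (hf : IsIndepBroadcast (caterpillar k lam) f)
    (hopt : cost f = betaB (caterpillar k lam)) :
    ∃ j : Fin (lam 0), 0 < f (Sum.inr ⟨0, j⟩) := by
  by_contra hno
  push_neg at hno
  have hno' : ∀ j : Fin (lam 0), f (Sum.inr ⟨0, j⟩) = 0 := fun j => Nat.le_zero.mp (hno j)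
  have hbB : 2 * k + 2 ≤ cost f := hopt ▸ betaB_lb hk h0 hl
  -- there is a broadcast vertex
  have hBne : (Finset.univ.filter (fun v : CatV k lam => 0 < f v)).Nonempty := by
    by_contra hB
    rw [Finset.not_nonempty_iff_eq_empty, Finset.filter_eq_empty_iff] at hB
    have : cost f = 0 := Finset.sum_eq_zero fun v _ => by
      have := hB (Finset.mem_univ v); omega
    omega
  obtain ⟨u, huB, hmin⟩ := Finset.exists_min_image _
    (fun v => (caterpillar k lam).dist (Sum.inl 0) v) hBne
  have hfu : 0 < f u := (Finset.mem_filter.mp huB).2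
  set t0 : Fin (lam 0) := ⟨0, h0⟩ with ht0
  set l0 : CatV k lam := Sum.inr ⟨0, t0⟩ with hl0
  have hfl0 : f l0 = 0 := hno' t0
  have hul0 : u ≠ l0 := fun h => by rw [h, hfl0] at hfu; omega
  have hu0 : ∀ t : Fin (lam 0), u ≠ Sum.inr ⟨0, t⟩ := by
    intro t h
    rw [h, hno' t] at hfu; omega
  by_cases hA : f u + 1 ≤ k + 2
  · -- move broadcast from u to the end leaf l0, gaining 1
    set f' : CatV k lam → ℕ :=
      Function.update (Function.update f u 0) l0 (f u + 1) with hf'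
    have hf'l0 : f' l0 = f u + 1 := by simp [hf']
    have hf'u : f' u = 0 := by
      rw [hf', Function.update_of_ne hul0, Function.update_self]
    have hf'other : ∀ v, v ≠ l0 → v ≠ u → f' v = f v := by
      intro v h1 h2
      rw [hf', Function.update_of_ne h1, Function.update_of_ne h2]
    have claim : ∀ w, w ≠ l0 → w ≠ u → 0 < f w →
        max (f u + 1) (f w) < (caterpillar k lam).dist l0 w := by
      intro w hwl0 hwu hw
      have hw0 : ∀ t : Fin (lam 0), w ≠ Sum.inr ⟨0, t⟩ := by
        intro t h
        rw [h, hno' t] at hw; omega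
      have h1 : (caterpillar k lam).dist u w ≤ (caterpillar k lam).dist (Sum.inl 0) w :=
        dist_from0_le hu0 hw0 (Ne.symm hwu)
          (hmin w (Finset.mem_filter.mpr ⟨Finset.mem_univ w, hw⟩))
      have h2 : max (f u) (f w) < (caterpillar k lam).dist u w :=
        hf.2 u w (Ne.symm hwu) hfu hw
      have h3 : (caterpillar k lam).dist l0 w =
          (caterpillar k lam).dist (Sum.inl 0) w + 1 := dist_leaf_eq t0 hwl0
      rw [h3]
      rw [max_lt_iff] at h2 ⊢
      omega
    have hib : IsIndepBroadcast (caterpillar k lam) f' := by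
      constructor
      · intro v
        by_cases h1 : v = l0
        · subst h1
          rw [hf'l0, hl0]
          have := ecc_leaf0 hk hl t0
          omega
        by_cases h2 : v = u
        · subst h2; rw [hf'u]; omega
        · rw [hf'other v h1 h2]; exact hf.1 v
      · intro x y hxy hx hy
        by_cases hx0 : x = l0
        · subst hx0
          have hyl : y ≠ l0 := fun h => hxy h.symm
          have hyu : y ≠ u := fun h => by rw [h, hf'u] at hy; omega
          rw [hf'l0, hf'other y hyl hyu]
          exact claim y hyl hyu (by rwa [hf'other y hyl hyu] at hy)
        by_cases hy0 : y = l0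
        · subst hy0
          have hxu : x ≠ u := fun h => by rw [h, hf'u] at hx; omega
          rw [hf'l0, hf'other x hx0 hxu, SimpleGraph.dist_comm, max_comm]
          exact claim x hx0 hxu (by rwa [hf'other x hx0 hxu] at hx)
        · have hxu : x ≠ u := fun h => by rw [h, hf'u] at hx; omega
          have hyu : y ≠ u := fun h => by rw [h, hf'u] at hy; omega
          rw [hf'other x hx0 hxu, hf'other y hy0 hyu]
          exact hf.2 x y hxy (by rwa [hf'other x hx0 hxu] at hx)
            (by rwa [hf'other y hy0 hyu] at hy)
    -- cost computation
    have humem : u ∈ Finset.univ.erase l0 :=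
      Finset.mem_erase.mpr ⟨hul0, Finset.mem_univ u⟩
    have hrest : ∀ x ∈ (Finset.univ.erase l0).erase u, f' x = f x := by
      intro x hx
      rw [Finset.mem_erase, Finset.mem_erase] at hx
      exact hf'other x hx.2.1 hx.1
    have e1 : cost f' = f' l0 + (f' u + ∑ x ∈ (Finset.univ.erase l0).erase u, f' x) := by
      rw [cost, ← Finset.add_sum_erase _ f' (Finset.mem_univ l0),
        ← Finset.add_sum_erase _ f' humem]
    have e2 : cost f = f l0 + (f u + ∑ x ∈ (Finset.univ.erase l0).erase u, f x) := by
      rw [cost, ← Finset.add_sum_erase _ f (Finset.mem_univ l0),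
        ← Finset.add_sum_erase _ f humem]
    have e3 : ∑ x ∈ (Finset.univ.erase l0).erase u, f' x
        = ∑ x ∈ (Finset.univ.erase l0).erase u, f x := Finset.sum_congr rfl hrest
    have hcost' : cost f' = cost f + 1 := by
      rw [e1, e2, e3, hf'l0, hf'u, hfl0]
      omega
    have : cost f' ≤ betaB (caterpillar k lam) := cost_le_betaB _ f' hib
    omega
  · -- f u is huge : u is the unique broadcast vertex, contradiction with betaB ≥ 2k+2
    have huniq : ∀ w, w ≠ u → f w = 0 := by
      intro w hwu
      by_contra hw
      have hw' : 0 < f w := Nat.pos_of_ne_zero hw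
      have h2 : max (f u) (f w) < (caterpillar k lam).dist u w :=
        hf.2 u w (Ne.symm hwu) hfu hw'
      have h3 := dist_le_diam u w
      have h4 := le_max_left (f u) (f w)
      omega
    have hcf : cost f = f u := by
      rw [cost, ← Finset.add_sum_erase _ f (Finset.mem_univ u)]
      have : ∑ x ∈ Finset.univ.erase u, f x = 0 :=
        Finset.sum_eq_zero fun x hx => huniq x (Finset.mem_erase.mp hx).1
      omega
    have h5 : f u ≤ k + 2 := le_trans (hf.1 u) (ecc_le u)
    omega

end CatAux

namespace CatRev

open CatAux

variable {k : ℕ} {lam : Fin (k+1) → ℕ}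

lemma sigma_ext {m : Fin (k+1) → ℕ} {i j : Fin (k+1)} {t : Fin (m i)} {s : Fin (m j)}
    (h : i = j) (hv : (t : ℕ) = (s : ℕ)) : (⟨i, t⟩ : Σ a, Fin (m a)) = ⟨j, s⟩ := by
  subst h
  exact congrArg _ (Fin.ext hv)

def revF : CatV k lam → CatV k (fun i => lam i.rev)
  | Sum.inl i => Sum.inl i.rev
  | Sum.inr ⟨i, t⟩ => Sum.inr ⟨i.rev, Fin.cast (congrArg lam (Fin.rev_rev i).symm) t⟩

def revG : CatV k (fun i => lam i.rev) → CatV k lam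
  | Sum.inl i => Sum.inl i.rev
  | Sum.inr ⟨i, t⟩ => Sum.inr ⟨i.rev, t⟩

@[simp] lemma revF_inl (i : Fin (k+1)) : (revF (Sum.inl i) : CatV k (fun i => lam i.rev)) = Sum.inl i.rev := rfl
@[simp] lemma revF_inr (i : Fin (k+1)) (t : Fin (lam i)) :
    (revF (Sum.inr ⟨i, t⟩) : CatV k (fun i => lam i.rev))
      = Sum.inr ⟨i.rev, Fin.cast (congrArg lam (Fin.rev_rev i).symm) t⟩ := rfl
@[simp] lemma revG_inl (i : Fin (k+1)) : (revG (Sum.inl i) : CatV k lam) = Sum.inl i.rev := rfl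
@[simp] lemma revG_inr (i : Fin (k+1)) (t : Fin (lam i.rev)) :
    (revG (Sum.inr ⟨i, t⟩) : CatV k lam) = Sum.inr ⟨i.rev, t⟩ := rfl

/-- the vertex equivalence reversing the spine -/
def revEquiv (k : ℕ) (lam : Fin (k+1) → ℕ) :
    CatV k lam ≃ CatV k (fun i => lam i.rev) where
  toFun := revF
  invFun := revG
  left_inv := by
    rintro (i | ⟨i, t⟩)
    · rw [revF_inl, revG_inl, Fin.rev_rev]
    · rw [revF_inr, revG_inr]
      congr 1
      refine sigma_ext (m := lam) (Fin.rev_rev i) ?_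
      rfl
  right_inv := by
    rintro (i | ⟨i, t⟩)
    · rw [revG_inl, revF_inl, Fin.rev_rev]
    · rw [revG_inr, revF_inr]
      congr 1
      refine sigma_ext (m := fun a => lam a.rev) (Fin.rev_rev i) ?_
      rfl

lemma val_rev' (i : Fin (k+1)) : (i.rev : ℕ) = k - (i : ℕ) := by
  rw [Fin.val_rev]
  omega

/-- the graph isomorphism reversing the spine -/
def revIso (k : ℕ) (lam : Fin (k+1) → ℕ) :
    caterpillar k lam ≃g caterpillar k (fun i => lam i.rev) where
  toEquiv := revEquiv k lam
  map_rel_iff' := by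
    intro u v
    rw [adj_iff, adj_iff]
    have hinj := (revEquiv k lam).injective
    constructor
    · rintro ⟨hne, h⟩
      refine ⟨fun he => hne (he ▸ rfl), ?_⟩
      rcases u with i | ⟨i, t⟩ <;> rcases v with j | ⟨j, s⟩ <;>
        simp only [revEquiv, Equiv.coe_fn_mk, revF_inl, revF_inr] at h ⊢ <;>
        rcases h with h | h <;>
        first
          | (left
             rw [val_rev', val_rev'] at h
             have := i.2; have := j.2
             omega)
          | (right
             rw [val_rev', val_rev'] at h
             have := i.2; have := j.2
             omega)
          | (left; exact Fin.rev_injective h)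
          | (right; exact Fin.rev_injective h)
          | exact h.elim
    · rintro ⟨hne, h⟩
      refine ⟨fun he => hne (hinj he), ?_⟩
      rcases u with i | ⟨i, t⟩ <;> rcases v with j | ⟨j, s⟩ <;>
        simp only [revEquiv, Equiv.coe_fn_mk, revF_inl, revF_inr] <;>
        rcases h with h | h <;>
        first
          | (left
             rw [val_rev', val_rev']
             have := i.2; have := j.2
             omega)
          | (right
             rw [val_rev', val_rev']
             have := i.2; have := j.2
             omega)
          | (left; exact congrArg Fin.rev h)
          | (right; exact congrArg Fin.rev h)
          | exact h.elim

end CatRev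

section Transfer

variable {W W' : Type*} [Fintype W] [Fintype W'] {G : SimpleGraph W} {G' : SimpleGraph W'}

lemma iso_dist (e : G ≃g G') (u v : W) : G'.dist (e u) (e v) = G.dist u v := by
  by_cases h : G.Reachable u v
  · obtain ⟨p, hp⟩ := h.exists_walk_length_eq_dist
    have h' : G'.Reachable (e u) (e v) := ⟨p.map e.toHom⟩
    obtain ⟨q, hq⟩ := h'.exists_walk_length_eq_dist
    refine le_antisymm ?_ ?_
    · calc G'.dist (e u) (e v) ≤ (p.map e.toHom).length := SimpleGraph.dist_le _
        _ = p.length := by simp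
        _ = G.dist u v := hp
    · calc G.dist u v ≤ ((q.map e.symm.toHom).copy (by simp) (by simp)).length :=
            SimpleGraph.dist_le _
        _ = q.length := by rw [SimpleGraph.Walk.length_copy, SimpleGraph.Walk.length_map]
        _ = G'.dist (e u) (e v) := hq
  · have h' : ¬ G'.Reachable (e u) (e v) := fun hr => by
      obtain ⟨q⟩ := hr
      exact h ⟨(q.map e.symm.toHom).copy (by simp) (by simp)⟩
    rw [SimpleGraph.dist_eq_zero_of_not_reachable h,
      SimpleGraph.dist_eq_zero_of_not_reachable h']

lemma iso_ecc (e : G ≃g G') (v : W) : ecc G' (e v) = ecc G v := by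
  unfold ecc
  refine le_antisymm (Finset.sup_le fun u _ => ?_) (Finset.sup_le fun u _ => ?_)
  · have : G'.dist (e v) u = G.dist v (e.symm u) := by
      conv_lhs => rw [show u = e (e.symm u) by simp]
      exact iso_dist e v (e.symm u)
    rw [this]
    exact Finset.le_sup (Finset.mem_univ _)
  · rw [← iso_dist e v u]
    exact Finset.le_sup (Finset.mem_univ _)

lemma iso_indep (e : G ≃g G') (g : W → ℕ) (hg : IsIndepBroadcast G g) :
    IsIndepBroadcast G' (g ∘ e.symm) := by
  constructor
  · intro v
    have : ecc G (e.symm v) = ecc G' v := by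
      conv_rhs => rw [show v = e (e.symm v) by simp]
      exact (iso_ecc e (e.symm v)).symm
    exact this ▸ hg.1 (e.symm v)
  · intro u v huv hu hv
    have hne : e.symm u ≠ e.symm v := fun h => huv (e.symm.injective (by simpa using h))
    have := hg.2 _ _ hne hu hv
    have hd : G.dist (e.symm u) (e.symm v) = G'.dist u v := by
      rw [← iso_dist e (e.symm u) (e.symm v)]
      simp
    rw [hd] at this
    simpa using this

lemma iso_cost (e : G ≃g G') (g : W → ℕ) : cost (g ∘ e.symm) = cost g := by
  unfold cost
  exact Fintype.sum_equiv e.toEquiv.symm _ _ fun v => rfl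

lemma iso_betaB (e : G ≃g G') : betaB G' = betaB G := by
  unfold betaB
  congr 1
  ext c
  constructor
  · rintro ⟨g, hg, rfl⟩
    exact ⟨g ∘ e.symm.symm, iso_indep e.symm g hg, iso_cost e.symm g⟩
  · rintro ⟨g, hg, rfl⟩
    exact ⟨g ∘ e.symm, iso_indep e g hg, iso_cost e g⟩

end Transfer

theorem stmt8 (k : ℕ) (hk : 1 ≤ k) (lam : Fin (k+1) → ℕ)
    (h0 : 0 < lam 0) (hl : 0 < lam (Fin.last k))
    (f : CatV k lam → ℕ) (hf : IsIndepBroadcast (caterpillar k lam) f)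
    (hopt : cost f = betaB (caterpillar k lam)) :
    (∃ j : Fin (lam 0), 0 < f (Sum.inr ⟨0, j⟩)) ∧
    (∃ j : Fin (lam (Fin.last k)), 0 < f (Sum.inr ⟨Fin.last k, j⟩)) := by
  constructor
  · exact CatAux.key hk h0 hl f hf hopt
  · set e := CatRev.revIso k lam with he
    have h0' : 0 < (fun i : Fin (k+1) => lam i.rev) 0 := by
      show 0 < lam (Fin.rev 0)
      rw [Fin.rev_zero]
      exact hl
    have hl' : 0 < (fun i : Fin (k+1) => lam i.rev) (Fin.last k) := by
      show 0 < lam (Fin.rev (Fin.last k))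
      rw [Fin.rev_last]
      exact h0
    have hf' := iso_indep e f hf
    have hopt' : cost (f ∘ e.symm) = betaB (caterpillar k (fun i => lam i.rev)) := by
      rw [iso_cost e f, hopt, iso_betaB e]
    obtain ⟨j, hj⟩ := CatAux.key hk h0' hl' (f ∘ e.symm) hf' hopt'
    have hsymm : e.symm (Sum.inr ⟨0, j⟩) = Sum.inr ⟨(0 : Fin (k+1)).rev, j⟩ := rfl
    have hj' : 0 < f (Sum.inr ⟨(0 : Fin (k+1)).rev, j⟩) := by
      have : (f ∘ e.symm) (Sum.inr ⟨0, j⟩) = f (Sum.inr ⟨(0 : Fin (k+1)).rev, j⟩) := by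
        rw [Function.comp_apply, hsymm]
      rwa [this] at hj
    have gen : ∀ (i : Fin (k+1)), i = Fin.last k → ∀ (t : Fin (lam i)),
        0 < f (Sum.inr ⟨i, t⟩) →
        ∃ j' : Fin (lam (Fin.last k)), 0 < f (Sum.inr ⟨Fin.last k, j'⟩) := by
      rintro i rfl t h
      exact ⟨t, h⟩
    exact gen _ (Fin.rev_zero k) j hj'
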